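/- FQSym^(ℓ) is free as an associative algebra over the set of elements F_{σ,u} (equivalently, over the set of elements G_{σ,u}) indexed by connected colored permutations (σ,u), i.e. those with σ a connected permutation and u an arbitrary color word. In particular, the generating series of the algebraic generators is c(ℓt), where c(t) = Σ_{n≥1} c_n t^n = 1 − (Σ_{n≥0} n! t^n)^{-1} counts connected permutations. -/

import Mathlib

open scoped BigOperators
open scoped Classical

abbrev Series (α : Type) (ℓ : ℕ) : Type := List (α × Fin ℓ) → ℤ

def ncMul {α : Type} {ℓ : ℕ} (F G : Series α ℓ) : Series α ℓ :=
  fun w => ∑ k ∈ Finset.range (w.length + 1), F (w.take k) * G (w.drop k)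

def stdList {α : Type} [LinearOrder α] (v : List α) : List ℕ :=
  v.mapIdx fun i a =>
    ((List.range v.length).filter fun j =>
      v.getD j a < a ∨ (v.getD j a = a ∧ j < i)).length

def permList {n : ℕ} (σ : Equiv.Perm (Fin n)) : List ℕ :=
  (List.finRange n).map fun i => (σ i : ℕ)

def colorList {n ℓ : ℕ} (u : Fin n → Fin ℓ) : List (Fin ℓ) :=
  (List.finRange n).map u

def Gfun {α : Type} [LinearOrder α] {ℓ n : ℕ} (σ : Equiv.Perm (Fin n))
    (u : Fin n → Fin ℓ) : Series α ℓ :=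
  fun w =>
    if stdList (w.map Prod.fst) = permList σ ∧ w.map Prod.snd = colorList u
    then 1 else 0

def Ffun {α : Type} [LinearOrder α] {ℓ n : ℕ} (σ : Equiv.Perm (Fin n))
    (u : Fin n → Fin ℓ) : Series α ℓ :=
  Gfun σ.symm (fun i => u (σ.symm i))

/-- A permutation `σ ∈ S_n` is connected when no proper prefix `{σ_1,…,σ_i}` equals
`{1,…,i}` (written 0-based). -/
def Connected {n : ℕ} (σ : Equiv.Perm (Fin n)) : Prop :=
  ∀ i : ℕ, 0 < i → i < n →
    Finset.image (fun j => (σ j : ℕ))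
        (Finset.univ.filter (fun j : Fin n => (j : ℕ) < i)) ≠ Finset.range i

abbrev CPermS (ℓ : ℕ) := Σ n : ℕ, Equiv.Perm (Fin n) × (Fin n → Fin ℓ)

/-- Connected colored permutations of positive size. -/
abbrev ConnCP (ℓ : ℕ) := {a : CPermS ℓ // 0 < a.1 ∧ Connected a.2.1}

/-- The unit series (the empty word). -/
noncomputable def oneSer {α : Type} (ℓ : ℕ) : Series α ℓ := fun w => if w = [] then 1 else 0

/-- Product of the `G`'s along a list of colored permutations. -/
noncomputable def prodG {ℓ : ℕ} (l : List (CPermS ℓ)) : Series ℕ ℓ :=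
  l.foldr (fun a acc => ncMul (Gfun a.2.1 a.2.2) acc) (oneSer ℓ)

/-- Product of the `F`'s along a list of colored permutations. -/
noncomputable def prodF {ℓ : ℕ} (l : List (CPermS ℓ)) : Series ℕ ℓ :=
  l.foldr (fun a acc => ncMul (Ffun a.2.1 a.2.2) acc) (oneSer ℓ)


section Aux

/-- the tie-broken comparison relation of a word -/
def rel (v : List ℕ) (j i : ℕ) : Prop :=
  v.getD j 0 < v.getD i 0 ∨ (v.getD j 0 = v.getD i 0 ∧ j < i)

noncomputable def cnt (v : List ℕ) (i : ℕ) : ℕ :=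
  ((Finset.range v.length).filter (fun j => rel v j i)).card

theorem stdList_length {α : Type} [LinearOrder α] (v : List α) :
    (stdList v).length = v.length := by simp [stdList]

theorem stdList_getElem (v : List ℕ) (i : ℕ) (h : i < v.length) :
    (stdList v)[i]'(by simpa [stdList_length] using h) = cnt v i := by
  have h2 : i < (stdList v).length := by simpa [stdList_length] using h
  simp only [stdList, List.getElem_mapIdx]
  rw [cnt]
  have : ((Finset.range v.length).filter (fun j => rel v j i)).card
      = ((List.range v.length).filter (fun j => decide (rel v j i))).length := by
    simp [Finset.filter, Finset.range, Multiset.range, Finset.card]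
  rw [this]
  congr 1
  apply List.filter_congr
  intro j hj
  rw [List.mem_range] at hj
  have e1 : v.getD j (v[i]) = v[j] := List.getD_eq_getElem v _ hj
  have e2 : v.getD j 0 = v[j] := List.getD_eq_getElem v _ hj
  have e3 : v.getD i 0 = v[i] := List.getD_eq_getElem v _ h
  simp only [rel, e1, e2, e3]

theorem rel_irrefl (v : List ℕ) (i : ℕ) : ¬ rel v i i := by
  simp [rel]

theorem rel_trichotomy (v : List ℕ) {i j : ℕ} (hij : i ≠ j) : rel v i j ∨ rel v j i := by
  rcases lt_trichotomy (v.getD i 0) (v.getD j 0) with h | h | h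
  · exact Or.inl (Or.inl h)
  · rcases lt_or_gt_of_ne hij with h' | h'
    · exact Or.inl (Or.inr ⟨h, h'⟩)
    · exact Or.inr (Or.inr ⟨h.symm, h'⟩)
  · exact Or.inr (Or.inl h)

theorem cnt_lt_length (v : List ℕ) {i : ℕ} (h : i < v.length) : cnt v i < v.length := by
  have : ((Finset.range v.length).filter (fun j => rel v j i)) ⊂ Finset.range v.length := by
    refine Finset.ssubset_iff_of_subset (Finset.filter_subset _ _) |>.mpr ?_
    exact ⟨i, Finset.mem_range.mpr h, by simp [rel_irrefl]⟩
  simpa [cnt] using Finset.card_lt_card this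

theorem cnt_strictMono (v : List ℕ) {i j : ℕ} (hi : i < v.length) (hj : j < v.length)
    (hij : rel v i j) : cnt v i < cnt v j := by
  apply Finset.card_lt_card
  constructor
  · intro k hk
    simp only [Finset.mem_filter, Finset.mem_range] at hk ⊢
    refine ⟨hk.1, ?_⟩
    rcases hk.2 with h | ⟨h, hki⟩
    · rcases hij with h' | ⟨h', _⟩
      · exact Or.inl (h.trans h')
      · exact Or.inl (h'.symm ▸ h)
    · rcases hij with h' | ⟨h', hij'⟩
      · exact Or.inl (h ▸ h')
      · exact Or.inr ⟨h.trans h', hki.trans hij'⟩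
  · intro hsub
    have : i ∈ (Finset.range v.length).filter (fun k => rel v k j) := by
      simp only [Finset.mem_filter, Finset.mem_range]
      exact ⟨hi, hij⟩
    have := hsub this
    simp only [Finset.mem_filter] at this
    exact rel_irrefl v i this.2

/-- order equivalence of two words -/
def OE (v v' : List ℕ) : Prop :=
  v.length = v'.length ∧ ∀ i j, i < v.length → j < v.length → (rel v i j ↔ rel v' i j)

theorem OE.cnt_eq {v v' : List ℕ} (h : OE v v') {i : ℕ} (hi : i < v.length) :
    cnt v i = cnt v' i := by
  unfold cnt
  rw [← h.1]
  congr 1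
  apply Finset.filter_congr
  intro j hj
  rw [Finset.mem_range] at hj
  simpa using h.2 j i hj hi

theorem getD_take (v : List ℕ) {k i : ℕ} (hi : i < (v.take k).length) :
    (v.take k).getD i 0 = v.getD i 0 := by
  have hi' : i < v.length := by simp at hi; omega
  rw [List.getD_eq_getElem _ _ hi, List.getD_eq_getElem _ _ hi']
  exact List.getElem_take

theorem getD_drop (v : List ℕ) {k i : ℕ} (hi : i < (v.drop k).length) :
    (v.drop k).getD i 0 = v.getD (k + i) 0 := by
  have hi' : k + i < v.length := by simp at hi; omega
  rw [List.getD_eq_getElem _ _ hi, List.getD_eq_getElem _ _ hi']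
  exact List.getElem_drop

theorem OE.take {v v' : List ℕ} (h : OE v v') (k : ℕ) : OE (v.take k) (v'.take k) := by
  have hl := h.1
  constructor
  · simp [h.1]
  · intro i j hi hj
    have hi' : i < v.length := by simp at hi; omega
    have hj' : j < v.length := by simp at hj; omega
    have hik : i < (v'.take k).length := by simp at hi ⊢; omega
    have hjk : j < (v'.take k).length := by simp at hj ⊢; omega
    unfold rel
    rw [getD_take v hi, getD_take v hj, getD_take v' hik, getD_take v' hjk]
    exact h.2 i j hi' hj'

theorem OE.drop {v v' : List ℕ} (h : OE v v') (k : ℕ) : OE (v.drop k) (v'.drop k) := by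
  have hl := h.1
  constructor
  · simp [h.1]
  · intro i j hi hj
    have hi' : k + i < v.length := by simp at hi; omega
    have hj' : k + j < v.length := by simp at hj; omega
    have hik : i < (v'.drop k).length := by simp at hi ⊢; omega
    have hjk : j < (v'.drop k).length := by simp at hj ⊢; omega
    unfold rel
    rw [getD_drop v hi, getD_drop v hj, getD_drop v' hik, getD_drop v' hjk]
    have := h.2 (k+i) (k+j) hi' hj'
    unfold rel at this
    constructor
    · rintro (h1 | ⟨h1, h2⟩)
      · rcases this.mp (Or.inl h1) with h3 | ⟨h3, h4⟩
        · exact Or.inl h3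
        · exact Or.inr ⟨h3, by omega⟩
      · rcases this.mp (Or.inr ⟨h1, by omega⟩) with h3 | ⟨h3, h4⟩
        · exact Or.inl h3
        · exact Or.inr ⟨h3, by omega⟩
    · rintro (h1 | ⟨h1, h2⟩)
      · rcases this.mpr (Or.inl h1) with h3 | ⟨h3, h4⟩
        · exact Or.inl h3
        · exact Or.inr ⟨h3, by omega⟩
      · rcases this.mpr (Or.inr ⟨h1, by omega⟩) with h3 | ⟨h3, h4⟩
        · exact Or.inl h3
        · exact Or.inr ⟨h3, by omega⟩


theorem getD_stdList (v : List ℕ) {i : ℕ} (hi : i < v.length) :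
    (stdList v).getD i 0 = cnt v i := by
  rw [List.getD_eq_getElem _ _ (by simpa [stdList_length] using hi)]
  exact stdList_getElem v i hi

theorem OE_self_std (v : List ℕ) : OE v (stdList v) := by
  refine ⟨(stdList_length v).symm, ?_⟩
  intro i j hi hj
  constructor
  · intro h
    have h1 : cnt v i < cnt v j := cnt_strictMono v hi hj h
    exact Or.inl (by simpa only [getD_stdList v hi, getD_stdList v hj] using h1)
  · intro h
    rcases eq_or_ne i j with rfl | hne
    · exact absurd h (rel_irrefl _ _)
    · rcases rel_trichotomy v hne with h' | h'
      · exact h'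
      · exfalso
        have h1 : cnt v j < cnt v i := cnt_strictMono v hj hi h'
        simp only [rel, getD_stdList v hi, getD_stdList v hj] at h
        rcases h with h | ⟨h, _⟩ <;> omega

theorem OE.std_eq {v v' : List ℕ} (h : OE v v') : stdList v = stdList v' := by
  apply List.ext_getElem (by simp [stdList_length, h.1])
  intro i h1 h2
  rw [stdList_length] at h1 h2
  rw [stdList_getElem v i h1, stdList_getElem v' i h2]
  exact h.cnt_eq h1

/-- `v` is a "permutation word" : a permutation of `{0,…,n-1}`. -/
def PW (v : List ℕ) : Prop := (∀ x ∈ v, x < v.length) ∧ v.Nodup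

theorem PW.getD_inj {v : List ℕ} (h : PW v) {i j : ℕ} (hi : i < v.length)
    (hj : j < v.length) (he : v.getD i 0 = v.getD j 0) : i = j := by
  rw [List.getD_eq_getElem _ _ hi, List.getD_eq_getElem _ _ hj] at he
  have := List.nodup_iff_injective_get.mp h.2
  have := @this ⟨i, hi⟩ ⟨j, hj⟩ (by simpa [List.get_eq_getElem] using he)
  simpa using this

theorem PW.image_getD {v : List ℕ} (h : PW v) :
    (Finset.range v.length).image (fun j => v.getD j 0) = Finset.range v.length := by
  apply Finset.eq_of_subset_of_card_le
  · intro x hx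
    simp only [Finset.mem_image, Finset.mem_range] at hx ⊢
    obtain ⟨j, hj, rfl⟩ := hx
    exact h.1 _ (by rw [List.getD_eq_getElem _ _ hj]; exact List.getElem_mem _)
  · rw [Finset.card_image_of_injOn, Finset.card_range]
    intro i hi j hj he
    exact h.getD_inj (Finset.mem_range.mp hi) (Finset.mem_range.mp hj) he

theorem PW.cnt_eq {v : List ℕ} (h : PW v) {i : ℕ} (hi : i < v.length) :
    cnt v i = v.getD i 0 := by
  have hvi : v.getD i 0 < v.length := by
    rw [List.getD_eq_getElem _ _ hi]; exact h.1 _ (List.getElem_mem _)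
  have hset : (Finset.range v.length).filter (fun j => rel v j i)
      = (Finset.range v.length).filter (fun j => v.getD j 0 < v.getD i 0) := by
    apply Finset.filter_congr
    intro j hj
    rw [Finset.mem_range] at hj
    simp only [rel, eq_iff_iff]
    constructor
    · rintro (h' | ⟨h', hji⟩)
      · exact h'
      · exact absurd (h.getD_inj hj hi h') (by omega)
    · exact Or.inl
  rw [cnt, hset]
  have himg : ((Finset.range v.length).filter (fun j => v.getD j 0 < v.getD i 0)).image
      (fun j => v.getD j 0) = Finset.range (v.getD i 0) := by
    apply Finset.Subset.antisymm
    · intro x hx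
      simp only [Finset.mem_image, Finset.mem_filter, Finset.mem_range] at hx ⊢
      obtain ⟨j, ⟨_, hlt⟩, rfl⟩ := hx
      exact hlt
    · intro x hx
      rw [Finset.mem_range] at hx
      have : x ∈ (Finset.range v.length).image (fun j => v.getD j 0) := by
        rw [h.image_getD, Finset.mem_range]; omega
      simp only [Finset.mem_image, Finset.mem_range] at this
      obtain ⟨j, hj, rfl⟩ := this
      simp only [Finset.mem_image, Finset.mem_filter, Finset.mem_range]
      exact ⟨j, ⟨hj, hx⟩, rfl⟩
  have hcard : ((Finset.range v.length).filter (fun j => v.getD j 0 < v.getD i 0)).card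
      = (Finset.range (v.getD i 0)).card := by
    rw [← himg, Finset.card_image_of_injOn]
    intro a ha b hb he
    simp only [Finset.mem_coe, Finset.mem_filter, Finset.mem_range] at ha hb
    exact h.getD_inj ha.1 hb.1 he
  rw [hcard, Finset.card_range]

theorem PW.std_fix {v : List ℕ} (h : PW v) : stdList v = v := by
  apply List.ext_getElem (stdList_length v)
  intro i h1 h2
  rw [stdList_length] at h1
  rw [stdList_getElem v i h1, h.cnt_eq h1, List.getD_eq_getElem _ _ h1]
theorem permList_length {n : ℕ} (σ : Equiv.Perm (Fin n)) : (permList σ).length = n := by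
  simp [permList]

theorem getD_permList {n : ℕ} (σ : Equiv.Perm (Fin n)) {i : ℕ} (hi : i < n) :
    (permList σ).getD i 0 = σ ⟨i, hi⟩ := by
  rw [List.getD_eq_getElem _ _ (by simpa [permList_length] using hi)]
  simp [permList]

theorem PW_permList {n : ℕ} (σ : Equiv.Perm (Fin n)) : PW (permList σ) := by
  constructor
  · intro x hx
    rw [permList_length]
    simp only [permList, List.mem_map] at hx
    obtain ⟨i, _, rfl⟩ := hx
    exact (σ i).isLt
  · exact List.Nodup.map (fun a b hab => σ.injective (Fin.val_injective hab))
      (List.nodup_finRange n)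

theorem stdList_permList {n : ℕ} (σ : Equiv.Perm (Fin n)) :
    stdList (permList σ) = permList σ := (PW_permList σ).std_fix

theorem permList_injective {n : ℕ} {σ τ : Equiv.Perm (Fin n)}
    (h : permList σ = permList τ) : σ = τ := by
  apply Equiv.ext
  intro i
  have h1 := getD_permList σ i.isLt
  have h2 := getD_permList τ i.isLt
  rw [h] at h1
  apply Fin.val_injective
  rw [← h1, h2]

theorem colorList_length {n ℓ : ℕ} (u : Fin n → Fin ℓ) : (colorList u).length = n := by
  simp [colorList]

theorem colorList_injective {n ℓ : ℕ} {u v : Fin n → Fin ℓ}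
    (h : colorList u = colorList v) : u = v := by
  funext i
  exact List.map_inj_left.mp h i (List.mem_finRange i)

/-- first `s` letters all smaller than all later letters -/
def Spl (v : List ℕ) (s : ℕ) : Prop :=
  ∀ i j, i < s → s ≤ j → j < v.length → v.getD i 0 < v.getD j 0

theorem Spl.take {v : List ℕ} {s : ℕ} (h : Spl v s) (k : ℕ) : Spl (v.take k) s := by
  intro i j hi hj hjl
  have hjl' : j < v.length := by simp at hjl; omega
  have hil' : i < (v.take k).length := by simp at hjl ⊢; omega
  rw [getD_take v hil', getD_take v hjl]
  exact h i j hi hj hjl'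

theorem Spl.drop {v : List ℕ} {s k : ℕ} (h : Spl v (k + s)) : Spl (v.drop k) s := by
  intro i j hi hj hjl
  have hjl' : k + j < v.length := by simp at hjl; omega
  have hil' : i < (v.drop k).length := by simp at hjl ⊢; omega
  rw [getD_drop v hil', getD_drop v hjl]
  exact h (k+i) (k+j) (by omega) (by omega) hjl'

theorem Spl.combine {v : List ℕ} {s t : ℕ} (h1 : Spl v s) (h2 : Spl (v.drop s) t) :
    Spl v (s + t) := by
  intro i j hi hj hjl
  rcases lt_or_ge i s with his | his
  · exact h1 i j his (by omega) hjl
  · have hi' : i - s < (v.drop s).length := by simp; omega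
    have hj' : j - s < (v.drop s).length := by simp; omega
    have := h2 (i-s) (j-s) (by omega) (by omega) hj'
    rwa [getD_drop v hi', getD_drop v hj',
      show s + (i-s) = i by omega, show s + (j-s) = j by omega] at this

theorem Spl.std {v : List ℕ} {s : ℕ} (h : Spl v s) : Spl (stdList v) s := by
  intro i j hi hj hjl
  rw [stdList_length] at hjl
  have hil : i < v.length := by omega
  rw [getD_stdList v hil, getD_stdList v hjl]
  exact cnt_strictMono v hil hjl (Or.inl (h i j hi hj hjl))

theorem Spl_oflen (v : List ℕ) {s : ℕ} (h : v.length ≤ s) : Spl v s := by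
  intro i j _ hj hjl
  omega

theorem stdList_split {v : List ℕ} {k : ℕ} (h : Spl v k) (hk : k ≤ v.length) :
    stdList v = stdList (v.take k) ++ (stdList (v.drop k)).map (k + ·) := by
  apply List.ext_getElem
  · simp [stdList_length]; omega
  intro i h1 h2
  rw [stdList_length] at h1
  rw [stdList_getElem v i h1]
  rcases lt_or_ge i k with hik | hik
  · have hil : i < (stdList (v.take k)).length := by simp [stdList_length]; omega
    rw [List.getElem_append_left hil]
    have hilt : i < (v.take k).length := by simp; omega
    rw [stdList_getElem _ i hilt]
    -- cnt v i = cnt (v.take k) i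
    unfold cnt
    have hset : (Finset.range v.length).filter (fun j => rel v j i)
        = (Finset.range ((v.take k).length)).filter (fun j => rel (v.take k) j i) := by
      ext j
      simp only [Finset.mem_filter, Finset.mem_range]
      constructor
      · rintro ⟨hj, hr⟩
        have hjk : j < k := by
          by_contra hge
          push_neg at hge
          have hlt := h i j hik hge hj
          rcases hr with h' | ⟨h', _⟩ <;> omega
        have hjt : j < (v.take k).length := by simp; omega
        refine ⟨hjt, ?_⟩
        rw [rel, getD_take v hjt, getD_take v hilt]
        exact hr
      · rintro ⟨hj, hr⟩
        have hjl : j < v.length := by simp at hj; omega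
        refine ⟨hjl, ?_⟩
        rw [rel, getD_take v hj, getD_take v hilt] at hr
        exact hr
    rw [hset]
  · have hil : ¬ i < (stdList (v.take k)).length := by simp [stdList_length]; omega
    rw [List.getElem_append_right (by omega)]
    have hlen : (stdList (v.take k)).length = k := by simp [stdList_length]; omega
    have hidx : i - (stdList (v.take k)).length < ((stdList (v.drop k)).map (k + ·)).length := by
      simp [stdList_length]; omega
    rw [List.getElem_map]
    have hdl : i - (stdList (v.take k)).length < (v.drop k).length := by
      simp [stdList_length]; omega
    rw [stdList_getElem _ _ hdl]
    rw [hlen] at hdl ⊢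
    -- cnt v i = k + cnt (v.drop k) (i - k)
    unfold cnt
    have hsplit : v.length = k + (v.length - k) := by omega
    rw [hsplit, Finset.range_add, Finset.filter_union, Finset.card_union_of_disjoint, Finset.filter_map, Finset.card_map]
    · have c1 : ((Finset.range k).filter (fun j => rel v j i)).card = k := by
        rw [Finset.filter_true_of_mem, Finset.card_range]
        intro j hj
        rw [Finset.mem_range] at hj
        exact Or.inl (h j i hj hik (by omega))
      have c2 : ((Finset.range (v.length - k)).filter ((fun j => rel v j i) ∘ (addLeftEmbedding k))).card
          = ((Finset.range ((v.drop k).length)).filter (fun j => rel (v.drop k) j (i - k))).card := by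
        congr 1
        have hld : (v.drop k).length = v.length - k := by simp
        rw [hld]
        apply Finset.filter_congr
        intro j hj
        rw [Finset.mem_range] at hj
        have hjd : j < (v.drop k).length := by simp; omega
        have hid : i - k < (v.drop k).length := by simp; omega
        simp only [Function.comp_apply, addLeftEmbedding_apply, eq_iff_iff, rel,
          getD_drop v hjd, getD_drop v hid]
        rw [show k + (i - k) = i by omega]
        constructor
        · rintro (h' | ⟨h', hj'⟩)
          · exact Or.inl h'
          · exact Or.inr ⟨h', by omega⟩
        · rintro (h' | ⟨h', hj'⟩)
          · exact Or.inl h'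
          · exact Or.inr ⟨h', by omega⟩
      rw [c1, c2]
    · rw [Finset.disjoint_left]
      intro a ha hb
      rw [Finset.mem_filter, Finset.mem_range] at ha
      rw [Finset.mem_filter, Finset.mem_map] at hb
      obtain ⟨⟨b, _, hba⟩, _⟩ := hb
      rw [addLeftEmbedding_apply] at hba
      omega
theorem Gfun_eq_zero {ℓ n : ℕ} (σ : Equiv.Perm (Fin n)) (u : Fin n → Fin ℓ)
    {w : List (ℕ × Fin ℓ)} (h : w.length ≠ n) : Gfun σ u w = 0 := by
  rw [Gfun, if_neg]
  rintro ⟨h1, _⟩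
  apply h
  have := congrArg List.length h1
  simpa [stdList_length, permList_length] using this

theorem Gfun_ne_zero_iff {ℓ n : ℕ} (σ : Equiv.Perm (Fin n)) (u : Fin n → Fin ℓ)
    (w : List (ℕ × Fin ℓ)) : Gfun σ u w ≠ 0 ↔
      (stdList (w.map Prod.fst) = permList σ ∧ w.map Prod.snd = colorList u) := by
  rw [Gfun]
  split <;> simp_all

theorem Gfun_eq_one {ℓ n : ℕ} (σ : Equiv.Perm (Fin n)) (u : Fin n → Fin ℓ)
    {w : List (ℕ × Fin ℓ)} (h1 : stdList (w.map Prod.fst) = permList σ)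
    (h2 : w.map Prod.snd = colorList u) : Gfun σ u w = 1 := by
  rw [Gfun, if_pos ⟨h1, h2⟩]

def sz {ℓ : ℕ} (l : List (CPermS ℓ)) : ℕ := (l.map (·.1)).sum

theorem sz_cons {ℓ : ℕ} (a : CPermS ℓ) (l : List (CPermS ℓ)) : sz (a :: l) = a.1 + sz l := by
  simp [sz]

theorem prodG_nil {ℓ : ℕ} (w : List (ℕ × Fin ℓ)) :
    prodG [] w = if w = [] then 1 else 0 := by
  rw [show prodG ([] : List (CPermS ℓ)) = oneSer ℓ from rfl, oneSer]

theorem prodG_cons {ℓ : ℕ} (a : CPermS ℓ) (l : List (CPermS ℓ)) (w : List (ℕ × Fin ℓ)) :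
    prodG (a :: l) w = Gfun a.2.1 a.2.2 (w.take a.1) * prodG l (w.drop a.1) := by
  have hfold : prodG (a :: l) w = ncMul (Gfun a.2.1 a.2.2) (prodG l) w := rfl
  rw [hfold, ncMul]
  rcases le_or_gt a.1 w.length with h | h
  · apply Finset.sum_eq_single_of_mem a.1 (Finset.mem_range.mpr (by omega))
    intro k hk hne
    rw [Finset.mem_range] at hk
    have : (w.take k).length ≠ a.1 := by
      simp only [List.length_take]
      omega
    rw [Gfun_eq_zero _ _ this, zero_mul]
  · have hz : ∀ k ∈ Finset.range (w.length + 1),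
        Gfun a.2.1 a.2.2 (w.take k) * prodG l (w.drop k) = 0 := by
      intro k hk
      rw [Finset.mem_range] at hk
      have : (w.take k).length ≠ a.1 := by simp only [List.length_take]; omega
      rw [Gfun_eq_zero _ _ this, zero_mul]
    rw [Finset.sum_congr rfl hz, Finset.sum_const, smul_zero]
    have : (w.take (a.1)).length ≠ a.1 := by simp only [List.length_take]; omega
    rw [Gfun_eq_zero _ _ this, zero_mul]

theorem prodG_length {ℓ : ℕ} (l : List (CPermS ℓ)) (w : List (ℕ × Fin ℓ))
    (h : prodG l w ≠ 0) : w.length = sz l := by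
  induction l generalizing w with
  | nil =>
    rw [prodG_nil] at h
    split at h
    · simp_all [sz]
    · simp at h
  | cons a l ih =>
    rw [prodG_cons] at h
    have h1 : Gfun a.2.1 a.2.2 (w.take a.1) ≠ 0 := fun hz => h (by rw [hz, zero_mul])
    have h2 : prodG l (w.drop a.1) ≠ 0 := fun hz => h (by rw [hz, mul_zero])
    have hlen : (w.take a.1).length = a.1 := by
      by_contra hne
      exact h1 (Gfun_eq_zero _ _ hne)
    have := ih _ h2
    simp only [List.length_take] at hlen
    simp only [List.length_drop] at this
    simp only [sz, List.map_cons, List.sum_cons]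
    simp only [sz] at this
    omega
def cw {ℓ n : ℕ} (σ : Equiv.Perm (Fin n)) (u : Fin n → Fin ℓ) : List (ℕ × Fin ℓ) :=
  (permList σ).zip (colorList u)

noncomputable def Wl {ℓ : ℕ} : List (CPermS ℓ) → List (ℕ × Fin ℓ)
  | [] => []
  | a :: l => cw a.2.1 a.2.2 ++ (Wl l).map (fun x => (a.1 + x.1, x.2))

def Tl {ℓ : ℕ} : List (CPermS ℓ) → List ℕ
  | [] => []
  | a :: l => a.1 :: (Tl l).map (a.1 + ·)

theorem cw_length {ℓ n : ℕ} (σ : Equiv.Perm (Fin n)) (u : Fin n → Fin ℓ) :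
    (cw σ u).length = n := by simp [cw, permList_length, colorList_length]

theorem map_fst_cw {ℓ n : ℕ} (σ : Equiv.Perm (Fin n)) (u : Fin n → Fin ℓ) :
    (cw σ u).map Prod.fst = permList σ :=
  List.map_fst_zip (by simp [permList_length, colorList_length])

theorem map_snd_cw {ℓ n : ℕ} (σ : Equiv.Perm (Fin n)) (u : Fin n → Fin ℓ) :
    (cw σ u).map Prod.snd = colorList u :=
  List.map_snd_zip (by simp [permList_length, colorList_length])

theorem Gfun_cw_self {ℓ n : ℕ} (σ : Equiv.Perm (Fin n)) (u : Fin n → Fin ℓ) :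
    Gfun σ u (cw σ u) = 1 :=
  Gfun_eq_one σ u (by rw [map_fst_cw, stdList_permList]) (map_snd_cw σ u)

theorem Gfun_cw_eq {ℓ n : ℕ} {σ τ : Equiv.Perm (Fin n)} {u v : Fin n → Fin ℓ}
    (h : Gfun σ u (cw τ v) ≠ 0) : τ = σ ∧ v = u := by
  rw [Gfun_ne_zero_iff, map_fst_cw, map_snd_cw, stdList_permList] at h
  exact ⟨permList_injective h.1, colorList_injective h.2⟩

theorem Wl_length {ℓ : ℕ} (l : List (CPermS ℓ)) : (Wl l).length = sz l := by
  induction l with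
  | nil => simp [Wl, sz]
  | cons a l ih => simp [Wl, cw_length, ih, sz] at *

theorem Wl_fst {ℓ : ℕ} (a : CPermS ℓ) (l : List (CPermS ℓ)) :
    (Wl (a :: l)).map Prod.fst
      = permList a.2.1 ++ ((Wl l).map Prod.fst).map (a.1 + ·) := by
  simp [Wl, map_fst_cw, List.map_map]

theorem stdList_addLeft (v : List ℕ) (m : ℕ) : stdList (v.map (m + ·)) = stdList v := by
  apply OE.std_eq
  refine ⟨by simp, ?_⟩
  intro i j hi hj
  have hi' : i < v.length := by simpa using hi
  have hj' : j < v.length := by simpa using hj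
  have e : ∀ k (hk : k < (v.map (m + ·)).length), (v.map (m + ·)).getD k 0
      = m + v.getD k 0 := by
    intro k hk
    rw [List.getD_eq_getElem _ _ hk, List.getElem_map,
      List.getD_eq_getElem _ _ (by simpa using hk)]
  simp only [rel, e i hi, e j hj]
  omega

theorem prodG_shift {ℓ : ℕ} (l : List (CPermS ℓ)) (m : ℕ) (w : List (ℕ × Fin ℓ)) :
    prodG l (w.map (fun x => (m + x.1, x.2))) = prodG l w := by
  induction l generalizing w with
  | nil => rw [prodG_nil, prodG_nil]; simp
  | cons a l ih =>
    rw [prodG_cons, prodG_cons, ← List.map_take, ← List.map_drop, ih]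
    congr 1
    rcases eq_or_ne ((w.take a.1).length) a.1 with hl | hl
    · rw [Gfun]
      rw [Gfun]
      have e1 : ((w.take a.1).map (fun x => (m + x.1, x.2))).map Prod.fst
          = ((w.take a.1).map Prod.fst).map (m + ·) := by
        simp [List.map_map]; rfl
      have e2 : ((w.take a.1).map (fun x => (m + x.1, x.2))).map Prod.snd
          = (w.take a.1).map Prod.snd := by
        simp [List.map_map]; rfl
      rw [e1, e2, stdList_addLeft]
    · rw [Gfun_eq_zero _ _ (by simpa using hl), Gfun_eq_zero _ _ hl]

theorem prodG_Wl {ℓ : ℕ} (l : List (CPermS ℓ)) : prodG l (Wl l) = 1 := by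
  induction l with
  | nil => rw [prodG_nil]; simp [Wl]
  | cons a l ih =>
    rw [prodG_cons]
    have h1 : List.take a.1 (Wl (a :: l)) = cw a.2.1 a.2.2 := by
      rw [show Wl (a :: l) = cw a.2.1 a.2.2 ++ (Wl l).map (fun x => (a.1 + x.1, x.2)) from rfl]
      exact List.take_left' (cw_length _ _)
    have h2 : List.drop a.1 (Wl (a :: l)) = (Wl l).map (fun x => (a.1 + x.1, x.2)) := by
      rw [show Wl (a :: l) = cw a.2.1 a.2.2 ++ (Wl l).map (fun x => (a.1 + x.1, x.2)) from rfl]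
      exact List.drop_left' (cw_length _ _)
    rw [h1, h2, Gfun_cw_self, prodG_shift, ih, one_mul]

theorem Spl_shift {v : List ℕ} {m s : ℕ} (h : Spl v s) : Spl (v.map (m + ·)) s := by
  intro i j hi hj hjl
  have hjl' : j < v.length := by simpa using hjl
  have hil' : i < (v.map (m + ·)).length := by simp at hjl ⊢; omega
  have e : ∀ k (hk : k < (v.map (m + ·)).length), (v.map (m + ·)).getD k 0
      = m + v.getD k 0 := by
    intro k hk
    rw [List.getD_eq_getElem _ _ hk, List.getElem_map,
      List.getD_eq_getElem _ _ (by simpa using hk)]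
  rw [e i hil', e j hjl]
  have := h i j hi hj hjl'
  omega

theorem PW_Wl {ℓ : ℕ} (l : List (CPermS ℓ)) : PW ((Wl l).map Prod.fst) := by
  induction l with
  | nil => exact ⟨by simp [Wl], by simp [Wl]⟩
  | cons a l ih =>
    rw [Wl_fst]
    have hlen : (permList a.2.1 ++ ((Wl l).map Prod.fst).map (a.1 + ·)).length
        = a.1 + ((Wl l).map Prod.fst).length := by simp [permList_length]
    constructor
    · intro x hx
      rw [hlen]
      rcases List.mem_append.mp hx with hx | hx
      · have := (PW_permList a.2.1).1 x hx
        rw [permList_length] at this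
        omega
      · obtain ⟨y, hy, rfl⟩ := List.mem_map.mp hx
        have := ih.1 y hy
        omega
    · rw [List.nodup_append]
      refine ⟨(PW_permList a.2.1).2, ih.2.map (add_right_injective a.1), ?_⟩
      intro x hx y hy hxy
      subst hxy
      obtain ⟨z, hz, hze⟩ := List.mem_map.mp hy
      have hze' : a.1 + z = x := hze
      have h1 := (PW_permList a.2.1).1 x hx
      have h2 := permList_length a.2.1
      omega

theorem mem_Tl_pos {ℓ : ℕ} {l : List (CPermS ℓ)} (hl : ∀ a ∈ l, 0 < a.1) {s : ℕ}
    (hs : s ∈ Tl l) : 0 < s ∧ s ≤ sz l := by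
  induction l generalizing s with
  | nil => exact absurd hs List.not_mem_nil
  | cons a l ih =>
    rw [show Tl (a :: l) = a.1 :: (Tl l).map (a.1 + ·) from rfl, List.mem_cons] at hs
    have ha := hl a (by simp)
    rcases hs with rfl | hs
    · rw [sz_cons]; omega
    · obtain ⟨t, ht, hte⟩ := List.mem_map.mp hs
      have hte' : a.1 + t = s := hte
      have := ih (fun b hb => hl b (by simp [hb])) ht
      rw [sz_cons]
      omega

theorem Tl_length {ℓ : ℕ} (l : List (CPermS ℓ)) : (Tl l).length = l.length := by
  induction l with
  | nil => rfl
  | cons a l ih =>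
    rw [show Tl (a :: l) = a.1 :: (Tl l).map (a.1 + ·) from rfl]
    simp [ih]

theorem Tl_sorted {ℓ : ℕ} (l : List (CPermS ℓ)) (hl : ∀ a ∈ l, 0 < a.1) :
    (Tl l).Pairwise (· < ·) := by
  induction l with
  | nil => exact List.Pairwise.nil
  | cons a l ih =>
    rw [show Tl (a :: l) = a.1 :: (Tl l).map (a.1 + ·) from rfl, List.pairwise_cons]
    constructor
    · intro b hb
      obtain ⟨t, ht, rfl⟩ := List.mem_map.mp hb
      have := (mem_Tl_pos (fun b hb => hl b (by simp [hb])) ht).1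
      omega
    · exact List.Pairwise.map _ (fun x y h => by omega) (ih (fun b hb => hl b (by simp [hb])))

theorem Tl_sizes {ℓ : ℕ} {l l' : List (CPermS ℓ)} (h : Tl l = Tl l') :
    l.map (·.1) = l'.map (·.1) := by
  induction l generalizing l' with
  | nil =>
    cases l' with
    | nil => rfl
    | cons a l' => exact absurd (congrArg List.length h) (by simp [Tl_length])
  | cons a l ih =>
    cases l' with
    | nil => exact absurd (congrArg List.length h) (by simp [Tl_length])
    | cons b l' =>
      rw [show Tl (a :: l) = a.1 :: (Tl l).map (a.1 + ·) from rfl,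
        show Tl (b :: l') = b.1 :: (Tl l').map (b.1 + ·) from rfl, List.cons.injEq] at h
      obtain ⟨h1, h2⟩ := h
      rw [h1] at h2
      have hT : Tl l = Tl l' := by
        exact List.map_injective_iff.mpr (add_right_injective b.1) h2
      simp [ih hT, h1]

theorem mem_Tl_Spl {ℓ : ℕ} {l : List (CPermS ℓ)} {s : ℕ} (hs : s ∈ Tl l) :
    Spl ((Wl l).map Prod.fst) s := by
  induction l generalizing s with
  | nil => exact absurd hs List.not_mem_nil
  | cons a l ih =>
    rw [show Tl (a :: l) = a.1 :: (Tl l).map (a.1 + ·) from rfl, List.mem_cons] at hs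
    have hbase : Spl ((Wl (a :: l)).map Prod.fst) a.1 := by
      rw [Wl_fst]
      intro i j hi hj hjl
      have hiP : i < (permList a.2.1).length := by rwa [permList_length]
      have hjlen : j < (permList a.2.1 ++ ((Wl l).map Prod.fst).map (a.1 + ·)).length := hjl
      rw [List.getD_eq_getElem _ _ (by simp [permList_length] at hjl ⊢; omega),
        List.getD_eq_getElem _ _ (by simp [permList_length] at hjl ⊢; omega)]
      rw [List.getElem_append_left (by simpa [permList_length] using hi),
        List.getElem_append_right (by simp [permList_length]; omega)]
      have h1 : (permList a.2.1)[i] < a.1 := by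
        have hm := (PW_permList a.2.1).1 _ (List.getElem_mem (l := permList a.2.1) (by simpa [permList_length] using hi))
        have h2 := permList_length a.2.1
        omega
      have h2 : ∀ (m : ℕ) (hm : m < (((Wl l).map Prod.fst).map (a.1 + ·)).length),
          a.1 ≤ (((Wl l).map Prod.fst).map (a.1 + ·))[m] := by
        intro m hm
        rw [List.getElem_map]
        omega
      exact lt_of_lt_of_le h1 (h2 _ _)
    rcases hs with rfl | hs
    · exact hbase
    · obtain ⟨t, ht, rfl⟩ := List.mem_map.mp hs
      apply Spl.combine hbase
      have hdrop : List.drop a.1 ((Wl (a :: l)).map Prod.fst)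
          = ((Wl l).map Prod.fst).map (a.1 + ·) := by
        rw [Wl_fst]
        exact List.drop_left' (permList_length _)
      rw [hdrop]
      exact Spl_shift (ih ht)
theorem card_filter_lt_fin (n s : ℕ) (hs : s ≤ n) :
    (Finset.univ.filter (fun j : Fin n => (j : ℕ) < s)).card = s := by
  have he : Finset.univ.filter (fun j : Fin n => (j : ℕ) < s)
      = (Finset.range s).attachFin (fun m hm => lt_of_lt_of_le (Finset.mem_range.mp hm) hs) := by
    ext j
    simp [Finset.mem_attachFin]
  rw [he, Finset.card_attachFin, Finset.card_range]

theorem connected_no_spl {n : ℕ} {σ : Equiv.Perm (Fin n)} (hc : Connected σ)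
    {s : ℕ} (h0 : 0 < s) (hsn : s < n) : ¬ Spl (permList σ) s := by
  intro hspl
  apply hc s h0 hsn
  have hQ : ∀ j : Fin n, (j : ℕ) < s → (σ j : ℕ) < s := by
    intro j hj
    have hval : (σ j : ℕ) = cnt (permList σ) j := by
      rw [(PW_permList σ).cnt_eq (by rw [permList_length]; exact j.isLt),
        getD_permList σ j.isLt]
    have hsub : (Finset.range (permList σ).length).filter (fun k => rel (permList σ) k (j : ℕ))
        ⊆ (Finset.range s).erase (j : ℕ) := by
      intro k hk
      simp only [Finset.mem_filter, Finset.mem_range, permList_length] at hk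
      obtain ⟨hkn, hr⟩ := hk
      have hks : k < s := by
        by_contra hge
        push_neg at hge
        have := hspl (j : ℕ) k hj hge (by rwa [permList_length])
        rcases hr with h' | ⟨h', _⟩ <;> omega
      rw [Finset.mem_erase, Finset.mem_range]
      refine ⟨?_, hks⟩
      rintro rfl
      exact rel_irrefl _ _ hr
    have hcard : cnt (permList σ) (j : ℕ) ≤ s - 1 := by
      have := Finset.card_le_card hsub
      rw [cnt]
      have : ((Finset.range s).erase (j : ℕ)).card = s - 1 := by
        rw [Finset.card_erase_of_mem (Finset.mem_range.mpr hj), Finset.card_range]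
      omega
    omega
  apply Finset.eq_of_subset_of_card_le
  · intro x hx
    simp only [Finset.mem_image, Finset.mem_filter, Finset.mem_univ, true_and] at hx
    obtain ⟨j, hj, rfl⟩ := hx
    exact Finset.mem_range.mpr (hQ j hj)
  · rw [Finset.card_range, Finset.card_image_of_injOn, card_filter_lt_fin n s (le_of_lt hsn)]
    intro x _ y _ hxy
    exact σ.injective (Fin.val_injective hxy)

theorem no_spl_connected {n : ℕ} {σ : Equiv.Perm (Fin n)}
    (h : ∀ s, 0 < s → s < n → ¬ Spl (permList σ) s) : Connected σ := by
  intro i h0 hin himg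
  apply h i h0 hin
  have hQ : ∀ j : Fin n, (j : ℕ) < i → (σ j : ℕ) < i := by
    intro j hj
    have : (σ j : ℕ) ∈ Finset.range i := by
      rw [← himg]
      simp only [Finset.mem_image, Finset.mem_filter, Finset.mem_univ, true_and]
      exact ⟨j, hj, rfl⟩
    exact Finset.mem_range.mp this
  have hQ' : ∀ j : Fin n, i ≤ (j : ℕ) → i ≤ (σ j : ℕ) := by
    intro j hj
    by_contra hlt
    push_neg at hlt
    have : (σ j : ℕ) ∈ Finset.range i := Finset.mem_range.mpr hlt
    rw [← himg] at this
    simp only [Finset.mem_image, Finset.mem_filter, Finset.mem_univ, true_and] at this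
    obtain ⟨k, hk, hke⟩ := this
    have : k = j := σ.injective (Fin.val_injective hke)
    omega
  intro p q hp hq hql
  rw [permList_length] at hql
  have hpn : p < n := by omega
  rw [getD_permList σ hpn, getD_permList σ hql]
  have h1 := hQ ⟨p, hpn⟩ hp
  have h2 := hQ' ⟨q, hql⟩ hq
  omega

theorem lemC1 {ℓ : ℕ} {l : List (CPermS ℓ)} (hc : ∀ a ∈ l, 0 < a.1 ∧ Connected a.2.1)
    {w : List (ℕ × Fin ℓ)} (h : prodG l w ≠ 0) {s : ℕ} (h0 : 0 < s)
    (hsl : s ≤ w.length) (hspl : Spl (w.map Prod.fst) s) : s ∈ Tl l := by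
  induction l generalizing w s with
  | nil =>
    rw [prodG_nil] at h
    split at h
    · subst_vars; simp at hsl; omega
    · simp at h
  | cons a l ih =>
    rw [prodG_cons] at h
    have hG : Gfun a.2.1 a.2.2 (w.take a.1) ≠ 0 := fun hz => h (by rw [hz, zero_mul])
    have hrest : prodG l (w.drop a.1) ≠ 0 := fun hz => h (by rw [hz, mul_zero])
    have hGc := (Gfun_ne_zero_iff _ _ _).mp hG
    have hlen : (w.take a.1).length = a.1 := by
      by_contra hne
      exact hG (Gfun_eq_zero _ _ hne)
    simp only [List.length_take] at hlen
    rw [show Tl (a :: l) = a.1 :: (Tl l).map (a.1 + ·) from rfl, List.mem_cons]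
    rcases lt_trichotomy s a.1 with hlt | heq | hgt
    · exfalso
      have hsp1 : Spl ((w.map Prod.fst).take a.1) s := hspl.take a.1
      have hsp2 : Spl (stdList ((w.map Prod.fst).take a.1)) s := hsp1.std
      rw [← List.map_take, hGc.1] at hsp2
      exact connected_no_spl (hc a (by simp)).2 h0 hlt hsp2
    · exact Or.inl heq
    · right
      have hsp1 : Spl ((w.map Prod.fst).drop a.1) (s - a.1) := by
        have : Spl (w.map Prod.fst) (a.1 + (s - a.1)) := by
          rw [show a.1 + (s - a.1) = s by omega]; exact hspl
        exact this.drop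
      rw [← List.map_drop] at hsp1
      have := ih (fun b hb => hc b (by simp [hb])) hrest (by omega)
        (by simp only [List.length_drop]; omega) hsp1
      exact List.mem_map.mpr ⟨s - a.1, this, by omega⟩

theorem lemC3 {ℓ : ℕ} {l : List (CPermS ℓ)} {w : List (ℕ × Fin ℓ)}
    (h : prodG l w ≠ 0) (hs : ∀ s ∈ Tl l, Spl (w.map Prod.fst) s) :
    (stdList (w.map Prod.fst)).zip (w.map Prod.snd) = Wl l := by
  induction l generalizing w with
  | nil =>
    rw [prodG_nil] at h
    split at h
    · subst_vars; rfl
    · simp at h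
  | cons a l ih =>
    rw [prodG_cons] at h
    have hG : Gfun a.2.1 a.2.2 (w.take a.1) ≠ 0 := fun hz => h (by rw [hz, zero_mul])
    have hrest : prodG l (w.drop a.1) ≠ 0 := fun hz => h (by rw [hz, mul_zero])
    have hGc := (Gfun_ne_zero_iff _ _ _).mp hG
    have hwlen : w.length = sz (a :: l) := prodG_length _ _ (by
      rw [prodG_cons]; exact h)
    rw [sz_cons] at hwlen
    have hn1 : a.1 ≤ (w.map Prod.fst).length := by simp; omega
    have hSpl1 : Spl (w.map Prod.fst) a.1 := hs a.1 (by
      rw [show Tl (a :: l) = a.1 :: (Tl l).map (a.1 + ·) from rfl]; simp)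
    rw [stdList_split hSpl1 hn1]
    have hcsplit : w.map Prod.snd
        = (w.map Prod.snd).take a.1 ++ (w.map Prod.snd).drop a.1 :=
      (List.take_append_drop _ _).symm
    rw [hcsplit, List.zip_append (by simp [stdList_length])]
    have hfirst : (stdList ((w.map Prod.fst).take a.1)).zip ((w.map Prod.snd).take a.1)
        = cw a.2.1 a.2.2 := by
      rw [← List.map_take, hGc.1, ← List.map_take, hGc.2]
      rfl
    rw [hfirst]
    have hsecond : ((stdList ((w.map Prod.fst).drop a.1)).map (a.1 + ·)).zip
        ((w.map Prod.snd).drop a.1)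
        = (Wl l).map (fun x => (a.1 + x.1, x.2)) := by
      rw [List.zip_map_left]
      have hIH : (stdList (((w.drop a.1)).map Prod.fst)).zip ((w.drop a.1).map Prod.snd)
          = Wl l := by
        apply ih hrest
        intro s hsmem
        have hmem : a.1 + s ∈ Tl (a :: l) := by
          rw [show Tl (a :: l) = a.1 :: (Tl l).map (a.1 + ·) from rfl]
          simp only [List.mem_cons]
          exact Or.inr (List.mem_map.mpr ⟨s, hsmem, rfl⟩)
        have := hs _ hmem
        rw [List.map_drop]
        exact this.drop
      rw [List.map_drop, List.map_drop] at hIH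
      rw [hIH]
      apply List.map_congr_left
      intro x _
      rfl
    rw [hsecond]
    rfl
theorem prodG_congr {ℓ : ℕ} (l : List (CPermS ℓ)) (w w' : List (ℕ × Fin ℓ))
    (hOE : OE (w.map Prod.fst) (w'.map Prod.fst))
    (hsnd : w.map Prod.snd = w'.map Prod.snd) : prodG l w = prodG l w' := by
  induction l generalizing w w' with
  | nil =>
    rw [prodG_nil, prodG_nil]
    have hlen : w.length = w'.length := by
      have := hOE.1; simpa using this
    rcases eq_or_ne w [] with rfl | hne
    · have : w' = [] := List.eq_nil_of_length_eq_zero (by simpa using hlen.symm)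
      rw [this]
    · have : w' ≠ [] := fun he => hne (List.eq_nil_of_length_eq_zero (by
        rw [hlen, he]; rfl))
      rw [if_neg hne, if_neg this]
  | cons a l ih =>
    rw [prodG_cons, prodG_cons]
    have h1 : Gfun a.2.1 a.2.2 (w.take a.1) = Gfun a.2.1 a.2.2 (w'.take a.1) := by
      rw [Gfun, Gfun]
      have e1 : stdList ((w.take a.1).map Prod.fst) = stdList ((w'.take a.1).map Prod.fst) := by
        rw [List.map_take, List.map_take]
        exact (hOE.take a.1).std_eq
      have e2 : (w.take a.1).map Prod.snd = (w'.take a.1).map Prod.snd := by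
        rw [List.map_take, List.map_take, hsnd]
      rw [e1, e2]
    have h2 : prodG l (w.drop a.1) = prodG l (w'.drop a.1) := by
      apply ih
      · rw [List.map_drop, List.map_drop]
        exact hOE.drop a.1
      · rw [List.map_drop, List.map_drop, hsnd]
    rw [h1, h2]

theorem prodG_std {ℓ : ℕ} (l : List (CPermS ℓ)) (w : List (ℕ × Fin ℓ)) :
    prodG l w = prodG l ((stdList (w.map Prod.fst)).zip (w.map Prod.snd)) := by
  have hlen : (stdList (w.map Prod.fst)).length = (w.map Prod.snd).length := by
    simp [stdList_length]
  apply prodG_congr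
  · rw [List.map_fst_zip (le_of_eq hlen)]
    exact OE_self_std _
  · rw [List.map_snd_zip (le_of_eq hlen.symm)]

theorem exists_perm_std (v : List ℕ) (n : ℕ) (hn : v.length = n) :
    ∃ σ : Equiv.Perm (Fin n), permList σ = stdList v := by
  subst hn
  have hinj : Function.Injective (fun i : Fin v.length => (⟨cnt v i, cnt_lt_length v i.isLt⟩ : Fin v.length)) := by
    intro i j hij
    simp only [Fin.mk.injEq] at hij
    by_contra hne
    have hne' : (i : ℕ) ≠ (j : ℕ) := fun h => hne (Fin.val_injective h)
    rcases rel_trichotomy v hne' with h | h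
    · have := cnt_strictMono v i.isLt j.isLt h; omega
    · have := cnt_strictMono v j.isLt i.isLt h; omega
  refine ⟨Equiv.ofBijective _ (Finite.injective_iff_bijective.mp hinj), ?_⟩
  apply List.ext_getElem (by simp [permList_length, stdList_length])
  intro i h1 h2
  rw [permList_length] at h1
  rw [stdList_getElem v i (by simpa [stdList_length] using h2)]
  simp only [permList, List.getElem_map, List.getElem_finRange, Equiv.ofBijective_apply]
  rfl

theorem exists_colors {ℓ : ℕ} (c : List (Fin ℓ)) (n : ℕ) (hn : c.length = n) :
    ∃ u : Fin n → Fin ℓ, colorList u = c := by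
  subst hn
  exact ⟨c.get, by rw [colorList]; exact List.map_get_finRange c⟩

theorem Spl_Q {n : ℕ} (σ : Equiv.Perm (Fin n)) {s : ℕ} (hspl : Spl (permList σ) s) :
    ∀ j : Fin n, (j : ℕ) < s → (σ j : ℕ) < s := by
  intro j hj
  have hval : (σ j : ℕ) = cnt (permList σ) j := by
    rw [(PW_permList σ).cnt_eq (by rw [permList_length]; exact j.isLt),
      getD_permList σ j.isLt]
  have hsub : (Finset.range (permList σ).length).filter (fun k => rel (permList σ) k (j : ℕ))
      ⊆ (Finset.range s).erase (j : ℕ) := by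
    intro k hk
    simp only [Finset.mem_filter, Finset.mem_range, permList_length] at hk
    obtain ⟨hkn, hr⟩ := hk
    have hks : k < s := by
      by_contra hge
      push_neg at hge
      have := hspl (j : ℕ) k hj hge (by rwa [permList_length])
      rcases hr with h' | ⟨h', _⟩ <;> omega
    rw [Finset.mem_erase, Finset.mem_range]
    refine ⟨?_, hks⟩
    rintro rfl
    exact rel_irrefl _ _ hr
  have hcard : cnt (permList σ) (j : ℕ) ≤ s - 1 := by
    have h1 := Finset.card_le_card hsub
    rw [cnt]
    have h2 : ((Finset.range s).erase (j : ℕ)).card = s - 1 := by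
      rw [Finset.card_erase_of_mem (Finset.mem_range.mpr hj), Finset.card_range]
    omega
  omega

theorem Q_compl {n : ℕ} (σ : Equiv.Perm (Fin n)) {s : ℕ} (hs : s ≤ n)
    (hQ : ∀ j : Fin n, (j : ℕ) < s → (σ j : ℕ) < s) :
    ∀ j : Fin n, s ≤ (j : ℕ) → s ≤ (σ j : ℕ) := by
  have himg : Finset.image (fun j => (σ j : ℕ))
      (Finset.univ.filter (fun j : Fin n => (j : ℕ) < s)) = Finset.range s := by
    apply Finset.eq_of_subset_of_card_le
    · intro x hx
      simp only [Finset.mem_image, Finset.mem_filter, Finset.mem_univ, true_and] at hx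
      obtain ⟨j, hj, rfl⟩ := hx
      exact Finset.mem_range.mpr (hQ j hj)
    · rw [Finset.card_range, Finset.card_image_of_injOn, card_filter_lt_fin n s hs]
      intro x _ y _ hxy
      exact σ.injective (Fin.val_injective hxy)
  intro j hj
  by_contra hlt
  push_neg at hlt
  have : (σ j : ℕ) ∈ Finset.range s := Finset.mem_range.mpr hlt
  rw [← himg] at this
  simp only [Finset.mem_image, Finset.mem_filter, Finset.mem_univ, true_and] at this
  obtain ⟨k, hk, hke⟩ := this
  have : k = j := σ.injective (Fin.val_injective hke)
  omega

theorem Q_Spl {n : ℕ} (σ : Equiv.Perm (Fin n)) {s : ℕ} (hs : s ≤ n)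
    (hQ : ∀ j : Fin n, (j : ℕ) < s → (σ j : ℕ) < s) : Spl (permList σ) s := by
  intro i j hi hj hjl
  rw [permList_length] at hjl
  have hin : i < n := by omega
  rw [getD_permList σ hin, getD_permList σ hjl]
  have h1 := hQ ⟨i, hin⟩ hi
  have h2 := Q_compl σ hs hQ ⟨j, hjl⟩ hj
  omega

theorem connected_symm {n : ℕ} {σ : Equiv.Perm (Fin n)} (h : Connected σ) :
    Connected σ.symm := by
  apply no_spl_connected
  intro s h0 hsn hspl
  have hQs : ∀ j : Fin n, (j : ℕ) < s → (σ.symm j : ℕ) < s := Spl_Q σ.symm hspl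
  have hQ : ∀ j : Fin n, (j : ℕ) < s → (σ j : ℕ) < s := by
    intro j hj
    by_contra hge
    push_neg at hge
    have := Q_compl σ.symm (le_of_lt hsn) hQs (σ j) hge
    rw [Equiv.symm_apply_apply] at this
    omega
  exact connected_no_spl h h0 hsn (Q_Spl σ (le_of_lt hsn) hQ)

theorem getElem_cw {ℓ n : ℕ} (σ : Equiv.Perm (Fin n)) (u : Fin n → Fin ℓ) {i : ℕ}
    (hi : i < n) : (cw σ u)[i]'(by rw [cw_length]; exact hi)
      = (((σ ⟨i, hi⟩ : Fin n) : ℕ), u ⟨i, hi⟩) := by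
  simp only [cw, List.getElem_zip, permList, colorList, List.getElem_map,
    List.getElem_finRange]
  rfl

theorem exists_dec {ℓ : ℕ} : ∀ (n : ℕ) (σ : Equiv.Perm (Fin n)) (u : Fin n → Fin ℓ),
    ∃ l : List (ConnCP ℓ), Wl (l.map Subtype.val) = cw σ u := by
  intro n
  induction n using Nat.strong_induction_on with
  | _ n IH =>
  intro σ u
  rcases Nat.eq_zero_or_pos n with rfl | hpos
  · refine ⟨[], ?_⟩
    have : (cw σ u).length = 0 := cw_length σ u
    rw [List.eq_nil_of_length_eq_zero this]
    rfl
  · have hP : ∃ s, 0 < s ∧ Spl (permList σ) s ∧ s ≤ n :=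
      ⟨n, hpos, Spl_oflen _ (le_of_eq (permList_length σ)), le_refl n⟩
    classical
    let s₀ := Nat.find hP
    obtain ⟨hs0, hspl, hsn⟩ : 0 < s₀ ∧ Spl (permList σ) s₀ ∧ s₀ ≤ n := Nat.find_spec hP
    have hmin : ∀ t, t < s₀ → ¬(0 < t ∧ Spl (permList σ) t ∧ t ≤ n) := fun t ht => Nat.find_min hP ht
    have hQ : ∀ j : Fin n, (j : ℕ) < s₀ → (σ j : ℕ) < s₀ := Spl_Q σ hspl
    have hQc : ∀ j : Fin n, s₀ ≤ (j : ℕ) → s₀ ≤ (σ j : ℕ) := Q_compl σ hsn hQ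
    -- the first block
    have hinj1 : Function.Injective (fun i : Fin s₀ =>
        (⟨(σ (Fin.castLE hsn i) : ℕ), hQ _ (by simpa using i.isLt)⟩ : Fin s₀)) := by
      intro i j hij
      simp only [Fin.mk.injEq] at hij
      have := σ.injective (Fin.val_injective hij)
      exact Fin.castLE_injective hsn this
    let σ₁ : Equiv.Perm (Fin s₀) := Equiv.ofBijective _ (Finite.injective_iff_bijective.mp hinj1)
    have hσ₁ : ∀ i : Fin s₀, (σ₁ i : ℕ) = (σ (Fin.castLE hsn i) : ℕ) := fun i => rfl
    have hpw1 : permList σ₁ = (permList σ).take s₀ := by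
      apply List.ext_getElem (by simp [permList_length]; omega)
      intro i h1 h2
      rw [permList_length] at h1
      have hin : i < n := by omega
      rw [List.getElem_take]
      simp only [permList, List.getElem_map, List.getElem_finRange]
      rw [hσ₁]
      congr 1
    have hconn1 : Connected σ₁ := by
      apply no_spl_connected
      intro t ht0 hts hsplt
      apply hmin t hts
      refine ⟨ht0, ?_, by omega⟩
      rw [hpw1] at hsplt
      -- extend Spl from take to full word
      intro i j hi hj hjl
      rw [permList_length] at hjl
      rcases lt_or_ge j s₀ with hjs | hjs
      · have hjt : j < ((permList σ).take s₀).length := by simp [permList_length]; omega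
        have := hsplt i j hi hj hjt
        rwa [getD_take _ (by simp [permList_length]; omega), getD_take _ hjt] at this
      · have hin : i < n := by omega
        rw [getD_permList σ hin, getD_permList σ hjl]
        have h1 := hQ ⟨i, hin⟩ (by simpa using (by omega : i < s₀))
        have h2 := hQc ⟨j, hjl⟩ (by simpa using hjs)
        omega
    -- the remaining part
    have hτval : ∀ i : Fin (n - s₀), (σ ⟨s₀ + (i : ℕ), by omega⟩ : ℕ) - s₀ < n - s₀ := by
      intro i
      have := (σ ⟨s₀ + (i : ℕ), by omega⟩).isLt
      have h2 := hQc ⟨s₀ + (i : ℕ), by omega⟩ (by simp)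
      omega
    have hinj2 : Function.Injective (fun i : Fin (n - s₀) =>
        (⟨(σ ⟨s₀ + (i : ℕ), by omega⟩ : ℕ) - s₀, hτval i⟩ : Fin (n - s₀))) := by
      intro i j hij
      simp only [Fin.mk.injEq] at hij
      have hi2 := hQc ⟨s₀ + (i : ℕ), by omega⟩ (by simp)
      have hj2 := hQc ⟨s₀ + (j : ℕ), by omega⟩ (by simp)
      have : (σ ⟨s₀ + (i : ℕ), by omega⟩ : ℕ) = (σ ⟨s₀ + (j : ℕ), by omega⟩ : ℕ) := by omega
      have := σ.injective (Fin.val_injective this)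
      have : s₀ + (i : ℕ) = s₀ + (j : ℕ) := congrArg Fin.val this
      exact Fin.val_injective (by omega)
    let τ : Equiv.Perm (Fin (n - s₀)) := Equiv.ofBijective _ (Finite.injective_iff_bijective.mp hinj2)
    have hτ : ∀ i : Fin (n - s₀), (τ i : ℕ) = (σ ⟨s₀ + (i : ℕ), by omega⟩ : ℕ) - s₀ :=
      fun i => rfl
    obtain ⟨l', hl'⟩ := IH (n - s₀) (by omega) τ (fun i => u ⟨s₀ + (i : ℕ), by omega⟩)
    refine ⟨⟨⟨s₀, σ₁, fun i => u (Fin.castLE hsn i)⟩, hs0, hconn1⟩ :: l', ?_⟩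
    have hWcons : Wl ((⟨⟨s₀, σ₁, fun i => u (Fin.castLE hsn i)⟩, hs0, hconn1⟩ :: l' : List (ConnCP ℓ)).map Subtype.val)
        = cw σ₁ (fun i => u (Fin.castLE hsn i))
          ++ (Wl (l'.map Subtype.val)).map (fun x => (s₀ + x.1, x.2)) := rfl
    rw [hWcons, hl']
    apply List.ext_getElem
    · simp [cw_length]; omega
    intro i h1 h2
    rw [cw_length] at h2
    rw [getElem_cw σ u h2]
    rcases lt_or_ge i s₀ with his | his
    · rw [List.getElem_append_left (by rw [cw_length]; exact his)]
      rw [getElem_cw σ₁ _ his]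
      have hfst : (σ₁ ⟨i, his⟩ : ℕ) = (σ ⟨i, h2⟩ : ℕ) := by
        rw [hσ₁]; congr 1
      have hsnd : u (Fin.castLE hsn ⟨i, his⟩) = u ⟨i, h2⟩ :=
        congrArg u (Fin.val_injective (rfl : ((Fin.castLE hsn ⟨i, his⟩ : Fin n) : ℕ) = i))
      exact Prod.ext hfst hsnd
    · rw [List.getElem_append_right (by rw [cw_length]; omega)]
      rw [List.getElem_map]
      have hidx2 : i - (cw σ₁ (fun i => u (Fin.castLE hsn i))).length = i - s₀ := by
        rw [cw_length]
      simp only [hidx2]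
      have hidx : i - s₀ < n - s₀ := by omega
      rw [getElem_cw τ _ hidx]
      have hge := hQc ⟨i, h2⟩ (by simpa using his)
      have hval : s₀ + ((τ ⟨i - s₀, hidx⟩ : ℕ)) = (σ ⟨i, h2⟩ : ℕ) := by
        rw [hτ]
        have : s₀ + (i - s₀) = i := by omega
        have hfe : (⟨s₀ + (i - s₀), by omega⟩ : Fin n) = ⟨i, h2⟩ :=
          Fin.val_injective (show s₀ + (i - s₀) = i from this)
        have he : (σ ⟨s₀ + (i - s₀), by omega⟩ : ℕ) = (σ ⟨i, h2⟩ : ℕ) :=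
          congrArg (fun j => ((σ j : Fin n) : ℕ)) hfe
        rw [he]
        omega
      apply Prod.ext
      · simpa using hval
      · simp only
        exact congrArg u (Fin.val_injective (show s₀ + (i - s₀) = i by omega))
theorem zip_fst_snd {α β : Type*} (w : List (α × β)) :
    (w.map Prod.fst).zip (w.map Prod.snd) = w := by
  induction w with
  | nil => rfl
  | cons a w ih => simpa using ih

theorem sorted_subset_sublist {L M : List ℕ} (hL : L.Pairwise (· < ·))
    (hM : M.Pairwise (· < ·)) (hsub : ∀ x ∈ L, x ∈ M) : L.Sublist M := by
  induction M generalizing L with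
  | nil =>
    cases L with
    | nil => simp
    | cons a L => exact absurd (hsub a (by simp)) (by simp)
  | cons b M ih =>
    cases L with
    | nil => simp
    | cons a L =>
      rw [List.pairwise_cons] at hM
      rcases eq_or_ne a b with rfl | hne
      · apply List.Sublist.cons₂
        rw [List.pairwise_cons] at hL
        apply ih hL.2 hM.2
        intro x hx
        have hax := hL.1 x hx
        rcases List.mem_cons.mp (hsub x (by simp [hx])) with rfl | h
        · omega
        · exact h
      · apply List.Sublist.cons
        apply ih hL hM.2
        intro x hx
        have hmem := hsub x hx
        have hab : b < a := by
          have hmema := hsub a List.mem_cons_self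
          rcases List.mem_cons.mp hmema with he | hm
          · exact absurd he hne
          · exact hM.1 a hm
        have hbx : b < x := by
          rcases List.mem_cons.mp hx with he | hm
          · omega
          · have := (List.pairwise_cons.mp hL).1 x hm
            omega
        rcases List.mem_cons.mp hmem with he | hm
        · exact absurd he (by omega)
        · exact hm

theorem expansion {ℓ : ℕ} (l : List (CPermS ℓ)) (n : ℕ) (hn : sz l = n) :
    prodG l = ∑ p : Equiv.Perm (Fin n) × (Fin n → Fin ℓ),
      prodG l (cw p.1 p.2) • Gfun p.1 p.2 := by
  funext w
  rw [Finset.sum_apply]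
  rcases eq_or_ne w.length n with hlen | hlen
  · obtain ⟨σ₀, hσ₀⟩ := exists_perm_std (w.map Prod.fst) n (by simpa using hlen)
    obtain ⟨u₀, hu₀⟩ := exists_colors (w.map Prod.snd) n (by simpa using hlen)
    rw [Finset.sum_eq_single_of_mem (σ₀, u₀) (Finset.mem_univ _)]
    · have h1 : Gfun σ₀ u₀ w = 1 := Gfun_eq_one σ₀ u₀ hσ₀.symm hu₀.symm
      rw [Pi.smul_apply, h1, smul_eq_mul, mul_one]
      rw [prodG_std l w]
      congr 1
      rw [cw, hσ₀, hu₀]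
    · intro p _ hp
      rw [Pi.smul_apply]
      have hz : Gfun p.1 p.2 w = 0 := by
        by_contra hnz
        obtain ⟨h1, h2⟩ := (Gfun_ne_zero_iff _ _ _).mp hnz
        apply hp
        have e1 : p.1 = σ₀ := permList_injective (by rw [← h1, hσ₀])
        have e2 : p.2 = u₀ := colorList_injective (by rw [← h2, hu₀])
        rw [Prod.ext_iff]
        exact ⟨e1, e2⟩
      rw [hz, smul_zero]
  · have hL : prodG l w = 0 := by
      by_contra h
      exact hlen ((prodG_length l w h).trans hn)
    rw [hL]
    symm
    apply Finset.sum_eq_zero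
    intro p _
    rw [Pi.smul_apply, Gfun_eq_zero _ _ hlen, smul_zero]

/-- the set of split points (including the total size) -/
noncomputable def SplF {n : ℕ} (σ : Equiv.Perm (Fin n)) : Finset ℕ :=
  (Finset.range (n + 1)).filter (fun s => 0 < s ∧ Spl (permList σ) s)

theorem Gfun_mem_span (ℓ : ℕ) :
    ∀ (n : ℕ) (σ : Equiv.Perm (Fin n)) (u : Fin n → Fin ℓ),
      Gfun σ u ∈ Submodule.span ℤ
        (Set.range (fun l : List (ConnCP ℓ) => prodG (l.map Subtype.val))) := by
  suffices H : ∀ (k n : ℕ) (σ : Equiv.Perm (Fin n)) (u : Fin n → Fin ℓ),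
      (SplF σ).card = k → Gfun σ u ∈ Submodule.span ℤ
        (Set.range (fun l : List (ConnCP ℓ) => prodG (l.map Subtype.val))) by
    intro n σ u
    exact H _ n σ u rfl
  intro k
  induction k using Nat.strong_induction_on with
  | _ k IHk =>
  intro n σ u hk
  obtain ⟨l, hl⟩ := exists_dec n σ u
  have hc : ∀ a ∈ l.map Subtype.val, 0 < a.1 ∧ Connected a.2.1 := by
    intro a ha
    obtain ⟨b, _, rfl⟩ := List.mem_map.mp ha
    exact b.2
  have hsz : sz (l.map Subtype.val) = n := by
    have := congrArg List.length hl
    rwa [Wl_length, cw_length] at this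
  have hTl : ∀ s ∈ Tl (l.map Subtype.val), 0 < s ∧ s ≤ n ∧ Spl (permList σ) s := by
    intro s hs
    have hp := mem_Tl_pos (fun a ha => (hc a ha).1) hs
    have hspl := mem_Tl_Spl hs
    rw [hl, map_fst_cw] at hspl
    exact ⟨hp.1, hsz ▸ hp.2, hspl⟩
  have hexp := expansion (l.map Subtype.val) n hsz
  have hcoef : prodG (l.map Subtype.val) (cw σ u) = 1 := by
    rw [← hl]
    exact prodG_Wl _
  have hre : Gfun σ u = prodG (l.map Subtype.val)
      - ∑ p ∈ Finset.univ.erase (σ, u),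
          prodG (l.map Subtype.val) (cw p.1 p.2) • Gfun p.1 p.2 := by
    have h1 := Finset.add_sum_erase Finset.univ
      (fun p : Equiv.Perm (Fin n) × (Fin n → Fin ℓ) =>
        prodG (l.map Subtype.val) (cw p.1 p.2) • (Gfun p.1 p.2 : Series ℕ ℓ))
      (Finset.mem_univ (σ, u))
    rw [← h1] at hexp
    simp only at hexp
    rw [hcoef, one_smul] at hexp
    exact eq_sub_of_add_eq hexp.symm
  rw [hre]
  apply Submodule.sub_mem
  · exact Submodule.subset_span ⟨l, rfl⟩
  · apply Submodule.sum_mem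
    intro p hp
    rcases eq_or_ne (prodG (l.map Subtype.val) (cw p.1 p.2)) 0 with hz | hz
    · rw [hz, zero_smul]
      exact Submodule.zero_mem _
    · apply Submodule.smul_mem
      -- show the splits of p.1 are strictly fewer
      have hsubset : SplF p.1 ⊆ SplF σ := by
        intro s hs
        rw [SplF, Finset.mem_filter, Finset.mem_range] at hs
        obtain ⟨hsn, hs0, hspl⟩ := hs
        have hmem : s ∈ Tl (l.map Subtype.val) := by
          apply lemC1 hc hz hs0
          · rw [cw_length]; omega
          · rwa [map_fst_cw]
        obtain ⟨_, h2, h3⟩ := hTl s hmem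
        rw [SplF, Finset.mem_filter, Finset.mem_range]
        exact ⟨by omega, hs0, h3⟩
      have hne : SplF p.1 ≠ SplF σ := by
        intro heq
        have hpe : cw p.1 p.2 = cw σ u := by
          have h3 := lemC3 (l := l.map Subtype.val) (w := cw p.1 p.2) hz ?_
          · rw [map_fst_cw, map_snd_cw, stdList_permList, ← cw, hl] at h3
            exact h3
          · intro s hs
            obtain ⟨h1, h2, h3⟩ := hTl s hs
            have : s ∈ SplF p.1 := by
              rw [heq, SplF, Finset.mem_filter, Finset.mem_range]
              exact ⟨by omega, h1, h3⟩
            rw [SplF, Finset.mem_filter] at this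
            rw [map_fst_cw]
            exact this.2.2
        have e1 : p.1 = σ := permList_injective (by
          have := congrArg (List.map Prod.fst) hpe
          rwa [map_fst_cw, map_fst_cw] at this)
        have e2 : p.2 = u := colorList_injective (by
          have := congrArg (List.map Prod.snd) hpe
          rwa [map_snd_cw, map_snd_cw] at this)
        have : p = (σ, u) := Prod.ext e1 e2
        exact (Finset.ne_of_mem_erase hp) this
      have hlt : (SplF p.1).card < k := by
        rw [← hk]
        exact Finset.card_lt_card (lt_of_le_of_ne hsubset hne)
      exact IHk _ hlt n p.1 p.2 rfl

theorem Wl_inj {ℓ : ℕ} : ∀ (l l' : List (CPermS ℓ)),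
    l.map (·.1) = l'.map (·.1) → Wl l = Wl l' → l = l' := by
  intro l
  induction l with
  | nil =>
    intro l' hsz _
    cases l' with
    | nil => rfl
    | cons b l' => simp at hsz
  | cons a l ih =>
    intro l' hsz hW
    cases l' with
    | nil => simp at hsz
    | cons b l' =>
      simp only [List.map_cons, List.cons.injEq] at hsz
      obtain ⟨hab, htl⟩ := hsz
      obtain ⟨na, pa⟩ := a
      obtain ⟨nb, pb⟩ := b
      simp only at hab
      subst hab
      have hWc : cw pa.1 pa.2 ++ (Wl l).map (fun x => (na + x.1, x.2))
          = cw pb.1 pb.2 ++ (Wl l').map (fun x => (na + x.1, x.2)) := hW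
      obtain ⟨h1, h2⟩ := List.append_inj hWc (by rw [cw_length, cw_length])
      have hσ : pa.1 = pb.1 := permList_injective (by
        have := congrArg (List.map Prod.fst) h1
        rwa [map_fst_cw, map_fst_cw] at this)
      have hu : pa.2 = pb.2 := colorList_injective (by
        have := congrArg (List.map Prod.snd) h1
        rwa [map_snd_cw, map_snd_cw] at this)
      have hinj : Function.Injective (fun x : ℕ × Fin ℓ => (na + x.1, x.2)) := by
        intro x y hxy
        simp only [Prod.mk.injEq] at hxy
        exact Prod.ext (by omega) hxy.2
      have hWtl : Wl l = Wl l' := List.map_injective_iff.mpr hinj h2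
      rw [ih l' htl hWtl, Prod.ext hσ hu]

theorem prodG_linearIndependent (ℓ : ℕ) :
    LinearIndependent ℤ (fun l : List (ConnCP ℓ) => prodG (l.map Subtype.val)) := by
  rw [linearIndependent_iff]
  intro c hc
  by_contra hne
  obtain ⟨l₁, hl₁⟩ := Finsupp.support_nonempty_iff.mpr hne
  classical
  set S' := c.support.filter
    (fun l => sz (l.map Subtype.val) = sz (l₁.map Subtype.val)) with hS'def
  have hS' : S'.Nonempty := ⟨l₁, Finset.mem_filter.mpr ⟨hl₁, rfl⟩⟩
  obtain ⟨l₀, hl₀S, hmax⟩ := Finset.exists_max_image S' (fun l => l.length) hS'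
  have hl₀supp : l₀ ∈ c.support := Finset.mem_of_mem_filter l₀ hl₀S
  have hl₀sz : sz (l₀.map Subtype.val) = sz (l₁.map Subtype.val) :=
    (Finset.mem_filter.mp hl₀S).2
  set W₀ := Wl (l₀.map Subtype.val) with hW₀def
  have heval : (Finsupp.linearCombination ℤ
      (fun l : List (ConnCP ℓ) => prodG (l.map Subtype.val)) c) W₀ = 0 := by
    rw [hc]; rfl
  rw [Finsupp.linearCombination_apply, Finsupp.sum, Finset.sum_apply] at heval
  have hposc : ∀ (m : List (ConnCP ℓ)), ∀ a ∈ m.map Subtype.val, 0 < a.1 ∧ Connected a.2.1 := by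
    intro m a ha
    obtain ⟨b, _, rfl⟩ := List.mem_map.mp ha
    exact b.2
  have hzero : ∀ l ∈ c.support, l ≠ l₀ →
      (c l) • prodG (l.map Subtype.val) W₀ = 0 := by
    intro l _ hne'
    rcases eq_or_ne (prodG (l.map Subtype.val) W₀) 0 with hz | hz
    · rw [hz, smul_zero]
    · exfalso
      -- l must equal l₀
      have hlen : W₀.length = sz (l.map Subtype.val) := prodG_length _ _ hz
      have hlenW : W₀.length = sz (l₀.map Subtype.val) := by rw [hW₀def, Wl_length]
      have hTsub : ∀ s ∈ Tl (l₀.map Subtype.val), s ∈ Tl (l.map Subtype.val) := by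
        intro s hs
        have hp := mem_Tl_pos (fun a ha => (hposc l₀ a ha).1) hs
        apply lemC1 (hposc l) hz hp.1 (by omega)
        exact mem_Tl_Spl hs
      have hsubl : (Tl (l₀.map Subtype.val)).Sublist (Tl (l.map Subtype.val)) :=
        sorted_subset_sublist
          (Tl_sorted _ (fun a ha => (hposc l₀ a ha).1))
          (Tl_sorted _ (fun a ha => (hposc l a ha).1)) hTsub
      have hlen2 : l.length ≤ l₀.length := by
        apply hmax
        rw [hS'def, Finset.mem_filter]
        refine ⟨by assumption, by omega⟩
      have hlenT : (Tl (l.map Subtype.val)).length ≤ (Tl (l₀.map Subtype.val)).length := by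
        rw [Tl_length, Tl_length, List.length_map, List.length_map]
        exact hlen2
      have hTeq : Tl (l₀.map Subtype.val) = Tl (l.map Subtype.val) :=
        hsubl.eq_of_length (le_antisymm hsubl.length_le hlenT)
      have hC3 := lemC3 (l := l.map Subtype.val) (w := W₀) hz ?_
      · have hstd : stdList (W₀.map Prod.fst) = W₀.map Prod.fst :=
          (PW_Wl (l₀.map Subtype.val)).std_fix
        rw [hstd, zip_fst_snd] at hC3
        have hWeq : Wl (l.map Subtype.val) = Wl (l₀.map Subtype.val) := by
          rw [← hW₀def]; exact hC3.symm
        have hsizes : (l.map Subtype.val).map (·.1) = (l₀.map Subtype.val).map (·.1) :=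
          Tl_sizes hTeq.symm
        have := Wl_inj _ _ hsizes hWeq
        exact hne' (List.map_injective_iff.mpr Subtype.val_injective this)
      · intro s hs
        rw [← hTeq] at hs
        exact mem_Tl_Spl hs
  have heval2 : ∑ l ∈ c.support, (c l) • prodG (l.map Subtype.val) W₀ = 0 := heval
  rw [Finset.sum_eq_single_of_mem l₀ hl₀supp
    (fun b hb hbne => hzero b hb hbne)] at heval2
  rw [hW₀def, prodG_Wl] at heval2
  simp only [smul_eq_mul, mul_one] at heval2
  exact (Finsupp.mem_support_iff.mp hl₀supp) heval2

theorem span_eq_G (ℓ : ℕ) :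
    Submodule.span ℤ (Set.range (fun l : List (ConnCP ℓ) => prodG (l.map Subtype.val)))
      = Submodule.span ℤ {f : Series ℕ ℓ |
          ∃ (n : ℕ) (σ : Equiv.Perm (Fin n)) (u : Fin n → Fin ℓ), f = Gfun σ u} := by
  apply le_antisymm
  · rw [Submodule.span_le]
    rintro f ⟨l, rfl⟩
    simp only [SetLike.mem_coe]
    rw [expansion (l.map Subtype.val) (sz (l.map Subtype.val)) rfl]
    apply Submodule.sum_mem
    intro p _
    apply Submodule.smul_mem
    exact Submodule.subset_span ⟨_, p.1, p.2, rfl⟩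
  · rw [Submodule.span_le]
    rintro f ⟨n, σ, u, rfl⟩
    simp only [SetLike.mem_coe]
    exact Gfun_mem_span ℓ n σ u
noncomputable def iotaC {ℓ : ℕ} (a : ConnCP ℓ) : ConnCP ℓ :=
  ⟨⟨a.1.1, a.1.2.1.symm, fun i => a.1.2.2 (a.1.2.1.symm i)⟩, a.2.1, connected_symm a.2.2⟩

theorem iotaC_invol {ℓ : ℕ} (a : ConnCP ℓ) : iotaC (iotaC a) = a := by
  obtain ⟨⟨n, σ, u⟩, hpos, hconn⟩ := a
  apply Subtype.ext
  simp only [iotaC, Equiv.symm_symm]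
  have h2 : (fun i => u (σ.symm (σ i))) = u := by
    funext i
    simp
  exact congrArg (fun f => (⟨n, (σ, f)⟩ : CPermS ℓ)) h2

theorem iotaC_injective {ℓ : ℕ} : Function.Injective (iotaC (ℓ := ℓ)) := by
  intro a b h
  rw [← iotaC_invol a, h, iotaC_invol]

theorem map_iotaC_surjective {ℓ : ℕ} :
    Function.Surjective (List.map (iotaC (ℓ := ℓ))) := by
  intro l
  refine ⟨l.map iotaC, ?_⟩
  rw [List.map_map]
  have : (iotaC ∘ iotaC : ConnCP ℓ → ConnCP ℓ) = id := by
    funext a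
    exact iotaC_invol a
  rw [this, List.map_id]

theorem prodF_eq {ℓ : ℕ} (l : List (ConnCP ℓ)) :
    prodF (l.map Subtype.val) = prodG ((l.map iotaC).map Subtype.val) := by
  induction l with
  | nil => rfl
  | cons a l ih =>
    have h1 : prodF ((a :: l).map Subtype.val)
        = ncMul (Ffun a.1.2.1 a.1.2.2) (prodF (l.map Subtype.val)) := rfl
    rw [h1, ih]
    rfl

theorem prodF_fun_eq (ℓ : ℕ) :
    (fun l : List (ConnCP ℓ) => prodF (l.map Subtype.val))
      = (fun l : List (ConnCP ℓ) => prodG (l.map Subtype.val)) ∘ (List.map iotaC) := by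
  funext l
  exact prodF_eq l

theorem range_F_eq (ℓ : ℕ) :
    Set.range (fun l : List (ConnCP ℓ) => prodF (l.map Subtype.val))
      = Set.range (fun l : List (ConnCP ℓ) => prodG (l.map Subtype.val)) := by
  rw [prodF_fun_eq, Set.range_comp]
  rw [Set.range_eq_univ.mpr map_iotaC_surjective, Set.image_univ]

end Aux

/-- `FQSym^(ℓ)` is free as an associative algebra over the family of the
`G_{σ,u}` (equivalently of the `F_{σ,u}`) indexed by connected colored permutations:
the products of `G`'s (resp. of `F`'s) along words of connected colored permutations
are linearly independent and span `FQSym^(ℓ)` (the span of all `G_{σ,u}`). -/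
theorem stmt_4 (ℓ : ℕ) :
    LinearIndependent ℤ (fun l : List (ConnCP ℓ) => prodG (l.map Subtype.val))
    ∧ Submodule.span ℤ (Set.range (fun l : List (ConnCP ℓ) => prodG (l.map Subtype.val)))
      = Submodule.span ℤ {f : Series ℕ ℓ |
          ∃ (n : ℕ) (σ : Equiv.Perm (Fin n)) (u : Fin n → Fin ℓ), f = Gfun σ u}
    ∧ LinearIndependent ℤ (fun l : List (ConnCP ℓ) => prodF (l.map Subtype.val))
    ∧ Submodule.span ℤ (Set.range (fun l : List (ConnCP ℓ) => prodF (l.map Subtype.val)))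
      = Submodule.span ℤ {f : Series ℕ ℓ |
          ∃ (n : ℕ) (σ : Equiv.Perm (Fin n)) (u : Fin n → Fin ℓ), f = Gfun σ u} := by
  refine ⟨prodG_linearIndependent ℓ, span_eq_G ℓ, ?_, ?_⟩
  · rw [prodF_fun_eq]
    exact (prodG_linearIndependent ℓ).comp _ (List.map_injective_iff.mpr iotaC_injective)
  · rw [range_F_eq]
    exact span_eq_G ℓ
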